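/- Under assumptions (A1)-(A3), the augmented Lagrangian values along the asynchronous proximal ADMM iterates are bounded from below: for every time t ≥ 1, L({x_k^t}, z^t, {y_k^t}) ≥ P − Σ_{k=1}^K (L_k/2) Σ_{j∈N_k} diam²(X_j) > −∞, where P denotes the optimal value of the problem min Σ_k g_k({x_n}_{n∈N_k}) + h_k(x_k) subject to x_k ∈ X_k for all k, and diam(X_j) is the diameter of the compact set X_j. -/

import Mathlib

open Filter Topology RealInnerProductSpace

noncomputable section

/-- Zero-padded restriction of a vector of nodal variables to a neighborhood:
coordinates outside the neighborhood are set to zero. -/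
def restr {K : ℕ} (Nk : Finset (Fin K)) (v : Fin K → ℝ) : EuclideanSpace ℝ (Fin K) :=
  WithLp.toLp 2 (fun j => if j ∈ Nk then v j else 0)

/-- The setting of the asynchronous proximal ADMM: network data, assumptions
(A1)-(A2), and the algorithmic update equations (i)-(iii) together with the
delay bounds and the update-frequency condition. -/
structure ProxADMM (K : ℕ) where
  /-- neighborhoods, `j ∈ Nb k` means `j ∈ N_k` -/
  Nb : Fin K → Finset (Fin K)
  self_mem : ∀ k, k ∈ Nb k
  symm : ∀ k j, j ∈ Nb k ↔ k ∈ Nb j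
  /-- local cost of node `k`, as a function of the zero-padded neighborhood variables -/
  g : Fin K → EuclideanSpace ℝ (Fin K) → ℝ
  g_local : ∀ k v w, (∀ j ∈ Nb k, v j = w j) → g k v = g k w
  /-- the Lipschitz constants of (A1) -/
  L : Fin K → ℝ
  L_pos : ∀ k, 0 < L k
  g_diff : ∀ k, Differentiable ℝ (g k)
  /-- (A1): the gradient of `g k` is `L k`-Lipschitz -/
  g_grad_lip : ∀ k v w, ‖gradient (g k) v - gradient (g k) w‖ ≤ L k * ‖v - w‖
  /-- the convex nonsmooth part -/
  h : Fin K → ℝ → ℝ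
  h_convex : ∀ k, ConvexOn ℝ Set.univ (h k)
  /-- the constraint sets -/
  Xs : Fin K → Set ℝ
  Xs_nonempty : ∀ k, (Xs k).Nonempty
  Xs_compact : ∀ k, IsCompact (Xs k)
  Xs_convex : ∀ k, Convex ℝ (Xs k)
  /-- (A2): `g k` is bounded below over the constraint set -/
  g_bddBelow : ∀ k, ∃ b, ∀ v : Fin K → ℝ, (∀ j, v j ∈ Xs j) → b ≤ g k (restr (Nb k) v)
  /-- penalty parameters -/
  ρ : Fin K → ℝ
  ρ_pos : ∀ k, 0 < ρ k
  /-- update frequencies `f_k` -/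
  freq : Fin K → ℝ
  freq_pos : ∀ k, 0 < freq k
  freq_le_one : ∀ k, freq k ≤ 1
  /-- maximum delays `T_k` -/
  Td : Fin K → ℕ
  /-- updating sets `S^t` -/
  Sset : ℕ → Finset (Fin K)
  /-- delayed index: `τ t k = [t+1]_k` -/
  τ : ℕ → Fin K → ℕ
  τ_le : ∀ t k, τ t k ≤ t + 1
  τ_ge : ∀ t k, t + 1 ≤ τ t k + Td k
  /-- iterates -/
  x : ℕ → Fin K → Fin K → ℝ
  z : ℕ → Fin K → ℝ
  y : ℕ → Fin K → Fin K → ℝ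
  z_init_mem : ∀ j, z 0 j ∈ Xs j
  /-- (i): feasibility of the `z`-update -/
  z_update_mem : ∀ t j, j ∈ Sset t → z (t + 1) j ∈ Xs j
  /-- (i): for `j ∈ S^t`, `z_j^{t+1}` minimizes the `j`-th block over `X_j` -/
  z_update_min : ∀ t j, j ∈ Sset t → IsMinOn
      (fun w => h j w + ∑ k ∈ Nb j, (y t k j * (x t k j - w) + ρ k / 2 * (x t k j - w) ^ 2))
      (Xs j) (z (t + 1) j)
  /-- (i): non-updating nodes keep their old value -/
  z_noupdate : ∀ t j, j ∉ Sset t → z (t + 1) j = z t j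
  /-- (ii): proximal (linearized) `x`-update with delayed gradient -/
  x_update : ∀ t k, ∀ j ∈ Nb k,
      x (t + 1) k j = z (t + 1) j
        - (1 / ρ k) * (gradient (g k) (restr (Nb k) (z (τ t k))) j + y t k j)
  /-- (iii): dual update -/
  y_update : ∀ t k, ∀ j ∈ Nb k,
      y (t + 1) k j = y t k j + ρ k * (x (t + 1) k j - z (t + 1) j)
  /-- in any window of `T` consecutive iterations node `k` updates at least `f_k T` times -/
  update_freq : ∀ k (t₀ T : ℕ),
      freq k * T ≤ ((Finset.Ico t₀ (t₀ + T)).filter (fun t => k ∈ Sset t)).card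

/-- The augmented Lagrangian. -/
def ProxADMM.Lag {K : ℕ} (P : ProxADMM K) (xx : Fin K → Fin K → ℝ) (zz : Fin K → ℝ)
    (yy : Fin K → Fin K → ℝ) : ℝ :=
  ∑ k, (P.g k (restr (P.Nb k) (xx k)) + P.h k (zz k)
    + ∑ j ∈ P.Nb k, (yy k j * (xx k j - zz j) + P.ρ k / 2 * (xx k j - zz j) ^ 2))

end


section AuxLemmas

open Set

variable {K : ℕ}

lemma euclid_inner_eq (v w : EuclideanSpace ℝ (Fin K)) : ⟪v, w⟫ = ∑ j, v j * w j := by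
  simp [PiLp.inner_apply, RCLike.inner_apply]
  exact Finset.sum_congr rfl fun _ _ => mul_comm _ _

lemma euclid_normsq_eq (v : EuclideanSpace ℝ (Fin K)) : ‖v‖ ^ 2 = ∑ j, v j ^ 2 := by
  rw [← real_inner_self_eq_norm_sq]
  simp only [PiLp.inner_apply, RCLike.inner_apply, conj_trivial, sq]

/-- The `z`-iterates remain feasible. -/
lemma ProxADMM.z_mem (P : ProxADMM K) : ∀ t j, P.z t j ∈ P.Xs j := by
  intro t
  induction t with
  | zero => exact P.z_init_mem
  | succ t ih =>
    intro j
    by_cases hj : j ∈ P.Sset t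
    · exact P.z_update_mem t j hj
    · rw [P.z_noupdate t j hj]; exact ih j

/-- For `t ≥ 1` the multipliers equal minus the delayed gradient. -/
lemma ProxADMM.y_eq (P : ProxADMM K) (t : ℕ) (k : Fin K) (j : Fin K) (hj : j ∈ P.Nb k) :
    P.y (t + 1) k j = -(gradient (P.g k) (restr (P.Nb k) (P.z (P.τ t k))) j) := by
  have hx := P.x_update t k j hj
  have hy := P.y_update t k j hj
  have hρ : P.ρ k ≠ 0 := (P.ρ_pos k).ne'
  rw [hy, hx]
  field_simp
  ring

/-- Mean-value-theorem based descent estimate for a function with Lipschitz gradient,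
with the gradient evaluated at a delayed point `u`. -/
lemma descent_aux {g : EuclideanSpace ℝ (Fin K) → ℝ} {L : ℝ} (hL : 0 < L)
    (hdiff : Differentiable ℝ g)
    (hlip : ∀ v w, ‖gradient g v - gradient g w‖ ≤ L * ‖v - w‖)
    (u v x : EuclideanSpace ℝ (Fin K)) :
    g v - (3 * L / 2) * ‖x - v‖ ^ 2 - (L / 2) * ‖v - u‖ ^ 2 ≤ g x - ⟪gradient g u, x - v⟫ := by
  set d : EuclideanSpace ℝ (Fin K) := x - v with hd
  have hderiv : ∀ s : ℝ, HasDerivAt (fun s : ℝ => g (v + s • d))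
      (⟪gradient g (v + s • d), d⟫) s := by
    intro s
    have h1 : HasDerivAt (fun s : ℝ => v + s • d) d s := by
      simpa using ((hasDerivAt_id s).smul_const d).const_add v
    have h2 : HasFDerivAt g (InnerProductSpace.toDual ℝ _ (gradient g (v + s • d)))
        (v + s • d) := (hdiff _).hasGradientAt.hasFDerivAt
    simpa [InnerProductSpace.toDual_apply_apply, Function.comp_def] using h2.comp_hasDerivAt s h1
  obtain ⟨c, hc, hceq⟩ := exists_hasDerivAt_eq_slope (fun s : ℝ => g (v + s • d))
      (fun s => ⟪gradient g (v + s • d), d⟫) one_pos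
      (fun s _ => (hderiv s).continuousAt.continuousWithinAt)
      (fun s _ => hderiv s)
  have hc01 : 0 < c ∧ c < 1 := ⟨hc.1, hc.2⟩
  set w : EuclideanSpace ℝ (Fin K) := v + c • d with hw
  have heq : g x - g v = ⟪gradient g w, d⟫ := by
    have h1s : v + (1 : ℝ) • d = x := by simp [hd]
    have h0s : v + (0 : ℝ) • d = v := by simp
    rw [hceq, h1s, h0s]; ring
  have h3 : ⟪gradient g w - gradient g u, d⟫ ≥ -(‖gradient g w - gradient g u‖ * ‖d‖) := by
    have h := abs_real_inner_le_norm (gradient g w - gradient g u) d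
    linarith [neg_abs_le (⟪gradient g w - gradient g u, d⟫ : ℝ)]
  have h4 : ‖gradient g w - gradient g u‖ ≤ L * ‖w - u‖ := hlip w u
  have h5 : ‖w - u‖ ≤ ‖d‖ + ‖v - u‖ := by
    have hwe : w - u = c • d + (v - u) := by rw [hw]; abel
    rw [hwe]
    calc ‖c • d + (v - u)‖ ≤ ‖c • d‖ + ‖v - u‖ := norm_add_le _ _
      _ ≤ ‖d‖ + ‖v - u‖ := by
          rw [norm_smul]
          have hcn : ‖(c : ℝ)‖ ≤ 1 := by
            rw [Real.norm_eq_abs, abs_of_pos hc01.1]; linarith [hc01.2]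
          nlinarith [norm_nonneg d]
  have hsplit : ⟪gradient g w, d⟫ - ⟪gradient g u, d⟫ = ⟪gradient g w - gradient g u, d⟫ := by
    rw [inner_sub_left]
  have hnd : (0 : ℝ) ≤ ‖d‖ := norm_nonneg d
  have hnu : (0 : ℝ) ≤ ‖v - u‖ := norm_nonneg _
  have hnw : (0 : ℝ) ≤ ‖gradient g w - gradient g u‖ := norm_nonneg _
  nlinarith [sq_nonneg (‖d‖ - ‖v - u‖), mul_le_mul_of_nonneg_right h4 hnd,
    mul_le_mul_of_nonneg_right (mul_le_mul_of_nonneg_left h5 hL.le) hnd]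

/-- Per-node lower bound on the smooth + linear + quadratic part of the Lagrangian. -/
lemma ProxADMM.key (P : ProxADMM K) (hρ3 : ∀ k, 3 * P.L k ≤ P.ρ k) (s : ℕ) (k : Fin K) :
    P.g k (restr (P.Nb k) (P.z (s + 1)))
      - P.L k / 2 * ∑ j ∈ P.Nb k, Metric.diam (P.Xs j) ^ 2
    ≤ P.g k (restr (P.Nb k) (P.x (s + 1) k))
      + ∑ j ∈ P.Nb k, (P.y (s + 1) k j * (P.x (s + 1) k j - P.z (s + 1) j)
          + P.ρ k / 2 * (P.x (s + 1) k j - P.z (s + 1) j) ^ 2) := by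
  set u : EuclideanSpace ℝ (Fin K) := restr (P.Nb k) (P.z (P.τ s k)) with hu
  set v : EuclideanSpace ℝ (Fin K) := restr (P.Nb k) (P.z (s + 1)) with hv
  set xx : EuclideanSpace ℝ (Fin K) := restr (P.Nb k) (P.x (s + 1) k) with hxx
  have hsubj : ∀ j, (xx - v) j = if j ∈ P.Nb k then P.x (s + 1) k j - P.z (s + 1) j else 0 := by
    intro j
    by_cases hj : j ∈ P.Nb k <;> simp only [hxx, hv, restr, hj, PiLp.sub_apply, WithLp.ofLp_toLp, if_true, if_false, sub_zero]
  have h1 : ⟪gradient (P.g k) u, xx - v⟫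
      = ∑ j ∈ P.Nb k, gradient (P.g k) u j * (P.x (s + 1) k j - P.z (s + 1) j) := by
    rw [euclid_inner_eq]
    rw [← Finset.sum_subset (Finset.subset_univ (P.Nb k))]
    · exact Finset.sum_congr rfl fun j hj => by rw [hsubj j, if_pos hj]
    · intro j _ hj; rw [hsubj j, if_neg hj, mul_zero]
  have h2 : ‖xx - v‖ ^ 2 = ∑ j ∈ P.Nb k, (P.x (s + 1) k j - P.z (s + 1) j) ^ 2 := by
    rw [euclid_normsq_eq]
    rw [← Finset.sum_subset (Finset.subset_univ (P.Nb k))]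
    · exact Finset.sum_congr rfl fun j hj => by rw [hsubj j, if_pos hj]
    · intro j _ hj; rw [hsubj j, if_neg hj]; ring
  have hsum : ∑ j ∈ P.Nb k, (P.y (s + 1) k j * (P.x (s + 1) k j - P.z (s + 1) j)
        + P.ρ k / 2 * (P.x (s + 1) k j - P.z (s + 1) j) ^ 2)
      = -⟪gradient (P.g k) u, xx - v⟫ + P.ρ k / 2 * ‖xx - v‖ ^ 2 := by
    rw [h1, h2, Finset.mul_sum, ← Finset.sum_neg_distrib, ← Finset.sum_add_distrib]
    refine Finset.sum_congr rfl fun j hj => ?_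
    rw [P.y_eq s k j hj, ← hu]
    ring
  have hdesc := descent_aux (P.L_pos k) (P.g_diff k) (P.g_grad_lip k) u v xx
  have hvu : ‖v - u‖ ^ 2 ≤ ∑ j ∈ P.Nb k, Metric.diam (P.Xs j) ^ 2 := by
    have hsubj2 : ∀ j, (v - u) j
        = if j ∈ P.Nb k then P.z (s + 1) j - P.z (P.τ s k) j else 0 := by
      intro j
      by_cases hj : j ∈ P.Nb k <;> simp only [hu, hv, restr, hj, PiLp.sub_apply, WithLp.ofLp_toLp, if_true, if_false, sub_zero]
    rw [euclid_normsq_eq]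
    rw [← Finset.sum_subset (Finset.subset_univ (P.Nb k))
      (fun j _ hj => by rw [hsubj2 j, if_neg hj]; ring)]
    refine Finset.sum_le_sum fun j hj => ?_
    rw [hsubj2 j, if_pos hj]
    have hdist := Metric.dist_le_diam_of_mem (P.Xs_compact j).isBounded
      (P.z_mem (s + 1) j) (P.z_mem (P.τ s k) j)
    rw [Real.dist_eq] at hdist
    calc (P.z (s + 1) j - P.z (P.τ s k) j) ^ 2
        = |P.z (s + 1) j - P.z (P.τ s k) j| ^ 2 := (sq_abs _).symm
      _ ≤ Metric.diam (P.Xs j) ^ 2 := pow_le_pow_left₀ (abs_nonneg _) hdist 2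
  rw [hsum]
  have hn : (0 : ℝ) ≤ ‖xx - v‖ ^ 2 := sq_nonneg _
  have hL := P.L_pos k
  nlinarith [hρ3 k]

end AuxLemmas

/-- **Lemma 1(b)** (asynchronous proximal ADMM, assumptions (A1)-(A3)): the
augmented Lagrangian values along the iterates are bounded from below by
`P - Σ_k (L_k/2) Σ_{j∈N_k} diam²(X_j)`, where `P` is the optimal value of the
partially separable problem. -/
theorem prox_admm_lagrangian_bounded_below {K : ℕ} (P : ProxADMM K)
    (α β : Fin K → ℝ)
    (hα : ∀ k, α k = P.ρ k * P.freq k / 2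
      - (7 * P.L k / (2 * P.ρ k ^ 2) + 1 / P.ρ k) * ((P.Nb k).card : ℝ) * P.L k ^ 2
          * ((P.Td k : ℝ) + 1) ^ 2
      - ((P.Nb k).card : ℝ) * P.L k * (P.Td k : ℝ) ^ 2 / 2)
    (hβ : ∀ k, β k = P.ρ k - 7 * P.L k)
    (hA3 : ∀ k, 0 < α k ∧ 0 < β k)
    -- `Popt` is the optimal value of `min Σ_k g_k({x_n}_{n∈N_k}) + h_k(x_k)`
    -- subject to `x_k ∈ X_k` for every `k`
    (Popt : ℝ)
    (hPopt : Popt = sInf {v : ℝ | ∃ u : Fin K → ℝ, (∀ k, u k ∈ P.Xs k) ∧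
      v = ∑ k, (P.g k (restr (P.Nb k) u) + P.h k (u k))}) :
    ∀ t : ℕ, 1 ≤ t →
      Popt - ∑ k, P.L k / 2 * ∑ j ∈ P.Nb k, Metric.diam (P.Xs j) ^ 2
        ≤ P.Lag (P.x t) (P.z t) (P.y t) := by
  intro t ht
  obtain ⟨s, rfl⟩ : ∃ s, t = s + 1 := ⟨t - 1, (Nat.succ_pred_eq_of_pos ht).symm⟩
  have hρ3 : ∀ k, 3 * P.L k ≤ P.ρ k := by
    intro k
    have hb := (hA3 k).2
    rw [hβ k] at hb
    linarith [P.L_pos k]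
  -- feasible value of the `z`-iterate
  have hfeas : (∑ k, (P.g k (restr (P.Nb k) (P.z (s + 1))) + P.h k (P.z (s + 1) k)))
      ∈ {v : ℝ | ∃ u : Fin K → ℝ, (∀ k, u k ∈ P.Xs k) ∧
        v = ∑ k, (P.g k (restr (P.Nb k) u) + P.h k (u k))} :=
    ⟨P.z (s + 1), fun k => P.z_mem (s + 1) k, rfl⟩
  -- the feasible-value set is bounded below
  choose b hb using P.g_bddBelow
  have hmex : ∀ k : Fin K, ∃ m : ℝ, ∀ x ∈ P.Xs k, m ≤ P.h k x := by
    intro k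
    have hc : ContinuousOn (P.h k) (P.Xs k) :=
      ((P.h_convex k).continuousOn isOpen_univ).mono (Set.subset_univ _)
    obtain ⟨c, hcmem, hcmin⟩ := (P.Xs_compact k).exists_isMinOn (P.Xs_nonempty k) hc
    exact ⟨P.h k c, fun x hx => hcmin hx⟩
  choose m hm using hmex
  have hbdd : BddBelow {v : ℝ | ∃ u : Fin K → ℝ, (∀ k, u k ∈ P.Xs k) ∧
      v = ∑ k, (P.g k (restr (P.Nb k) u) + P.h k (u k))} := by
    refine ⟨∑ k, (b k + m k), fun v hv => ?_⟩
    obtain ⟨uu, huu, rfl⟩ := hv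
    exact Finset.sum_le_sum fun k _ => add_le_add (hb k uu huu) (hm k _ (huu k))
  have hPle : Popt ≤ ∑ k, (P.g k (restr (P.Nb k) (P.z (s + 1))) + P.h k (P.z (s + 1) k)) := by
    rw [hPopt]; exact csInf_le hbdd hfeas
  have hkey := fun k => P.key hρ3 s k
  have hsum : ∑ k, (P.g k (restr (P.Nb k) (P.z (s + 1))) + P.h k (P.z (s + 1) k)
        - P.L k / 2 * ∑ j ∈ P.Nb k, Metric.diam (P.Xs j) ^ 2)
      ≤ P.Lag (P.x (s + 1)) (P.z (s + 1)) (P.y (s + 1)) := by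
    unfold ProxADMM.Lag
    refine Finset.sum_le_sum fun k _ => ?_
    have := hkey k
    linarith
  have hsplit : ∑ k, (P.g k (restr (P.Nb k) (P.z (s + 1))) + P.h k (P.z (s + 1) k)
        - P.L k / 2 * ∑ j ∈ P.Nb k, Metric.diam (P.Xs j) ^ 2)
      = (∑ k, (P.g k (restr (P.Nb k) (P.z (s + 1))) + P.h k (P.z (s + 1) k)))
        - ∑ k, P.L k / 2 * ∑ j ∈ P.Nb k, Metric.diam (P.Xs j) ^ 2 := by
    rw [← Finset.sum_sub_distrib]
  linarith [hsum, hsplit ▸ hsum]
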